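/- Suppose that for all g₁, g₂ ∈ A with g₂ ∉ ⟨g₁⟩ there exists a finite-index normal subgroup Ḡ of G with g₂ ∉ ⟨g₁⟩·Ḡ. Then G is cyclic subgroup separable, i.e. for every g ∈ G the cyclic subgroup ⟨g⟩ is separable in G. -/

import Mathlib

open Subgroup Pointwise

/-- The free abelian group of rank `n`, written multiplicatively. -/
abbrev FreeAb (n : ℕ) : Type := Multiplicative (Fin n → ℤ)

/-- The isomorphism from `A = ⊤` onto the image `φ(A)` induced by an injective
endomorphism `φ` of the free abelian group `A`. -/
noncomputable def ascIso {n : ℕ} (φ : FreeAb n →* FreeAb n) (hφ : Function.Injective φ) :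
    (⊤ : Subgroup (FreeAb n)) ≃* φ.range :=
  Subgroup.topEquiv.trans (MonoidHom.ofInjective hφ)

/-- The ascending HNN extension `G = A∗_φ = ⟨A, t ∣ t·a·t⁻¹ = φ(a) for a ∈ A⟩`,
realized as the HNN extension of `A` over the subgroups `⊤` and `φ.range`. -/
abbrev AscHNN {n : ℕ} (φ : FreeAb n →* FreeAb n) (hφ : Function.Injective φ) : Type :=
  HNNExtension (FreeAb n) ⊤ φ.range (ascIso φ hφ)

namespace Stmt6Aux

variable {n : ℕ} (φ : FreeAb n →* FreeAb n) (hφ : Function.Injective φ)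

local notation "G" => AscHNN φ hφ
local notation "τ" => (HNNExtension.t : AscHNN φ hφ)

lemma conj1 (a : FreeAb n) :
    τ * HNNExtension.of a = (HNNExtension.of (φ a) : G) * τ := by
  have := HNNExtension.t_mul_of (φ := ascIso φ hφ) (⟨a, trivial⟩ : (⊤ : Subgroup (FreeAb n)))
  simpa [ascIso, MonoidHom.ofInjective_apply] using this

lemma conjq (q : ℕ) (a : FreeAb n) :
    τ ^ q * HNNExtension.of a = (HNNExtension.of ((⇑φ)^[q] a) : G) * τ ^ q := by
  induction q with
  | zero => simp
  | succ d ih =>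
    rw [pow_succ', mul_assoc, ih, ← mul_assoc, conj1, Function.iterate_succ_apply',
      mul_assoc, ← pow_succ']

lemma conjq' (d : ℕ) (a : FreeAb n) :
    (HNNExtension.of a : G) * (τ ^ d)⁻¹ = (τ ^ d)⁻¹ * HNNExtension.of ((⇑φ)^[d] a) := by
  rw [mul_inv_eq_iff_eq_mul, mul_assoc, ← conjq, inv_mul_cancel_left]

/-- The homomorphism `G → ℤ` sending `A` to 0 and `t` to 1. -/
noncomputable def pi : G →* Multiplicative ℤ :=
  HNNExtension.lift 1 (Multiplicative.ofAdd 1) (by intro a; simp)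

@[simp] lemma pi_of (a : FreeAb n) : pi φ hφ (HNNExtension.of a) = 1 := by
  simp [pi]

@[simp] lemma pi_t : pi φ hφ τ = Multiplicative.ofAdd 1 := by
  simp [pi]

/-- Structure: every element is `t⁻ᵖ a t^q`. -/
lemma structure_lemma (g : G) :
    ∃ (p q : ℕ) (a : FreeAb n), g = (τ⁻¹) ^ p * HNNExtension.of a * τ ^ q := by
  induction g using HNNExtension.induction_on with
  | of g => exact ⟨0, 0, g, by simp⟩
  | t => exact ⟨0, 1, 1, by simp⟩
  | inv x hx =>
    obtain ⟨p, q, a, rfl⟩ := hx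
    exact ⟨q, p, a⁻¹, by simp [mul_assoc, mul_inv_rev, inv_pow]⟩
  | mul x y hx hy =>
    obtain ⟨p, q, a, rfl⟩ := hx
    obtain ⟨p', q', a', rfl⟩ := hy
    rcases le_or_gt p' q with hle | hlt
    · refine ⟨p, (q - p') + q', a * (⇑φ)^[q - p'] a', ?_⟩
      have hq : τ ^ q = τ ^ (q - p') * τ ^ p' := by rw [← pow_add, Nat.sub_add_cancel hle]
      simp only [inv_pow, mul_assoc, hq, mul_inv_cancel_left, map_mul, pow_add]
      rw [← mul_assoc (τ ^ (q - p')), conjq φ hφ]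
      simp [mul_assoc]
    · refine ⟨p + (p' - q), q', (⇑φ)^[p' - q] a * a', ?_⟩
      have hq' : (τ : G) ^ p' = τ ^ (p' - q) * τ ^ q := by
        rw [← pow_add, Nat.sub_add_cancel hlt.le]
      simp only [inv_pow, mul_assoc, hq', mul_inv_rev, mul_inv_cancel_left, map_mul, pow_add]
      rw [← mul_assoc (HNNExtension.of a), conjq' φ hφ]
      simp [mul_assoc]

lemma pi_form (p q : ℕ) (a : FreeAb n) :
    pi φ hφ ((τ⁻¹) ^ p * HNNExtension.of a * τ ^ q) = Multiplicative.ofAdd ((q : ℤ) - p) := by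
  have : pi φ hφ ((τ⁻¹) ^ p * HNNExtension.of a * τ ^ q)
      = (Multiplicative.ofAdd (1:ℤ))⁻¹ ^ p * 1 * (Multiplicative.ofAdd (1:ℤ)) ^ q := by
    simp [map_mul, map_pow, map_inv]
  rw [this]
  apply Multiplicative.toAdd.injective
  simp
  omega

lemma ker_conj (g : G) (hg : pi φ hφ g = 1) :
    ∃ p : ℕ, ∀ k, p ≤ k → ∃ c : FreeAb n, τ ^ k * g * (τ ^ k)⁻¹ = HNNExtension.of c := by
  obtain ⟨p, q, a, rfl⟩ := structure_lemma φ hφ g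
  have hpq : (q : ℤ) - p = 0 := by
    have := pi_form φ hφ p q a
    rw [hg] at this
    simpa using congrArg Multiplicative.toAdd this.symm
  have hqp : q = p := by omega
  subst hqp
  refine ⟨q, fun k hk => ⟨(⇑φ)^[k - q] a, ?_⟩⟩
  have hsplit : (τ : G) ^ k = τ ^ (k - q) * τ ^ q := by
    rw [← pow_add, Nat.sub_add_cancel hk]
  have h1 : (τ:G) ^ k * ((τ⁻¹) ^ q * HNNExtension.of a * τ ^ q) * (τ ^ k)⁻¹
      = τ ^ (k - q) * HNNExtension.of a * (τ ^ (k - q))⁻¹ := by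
    rw [hsplit, inv_pow]
    simp only [mul_assoc, mul_inv_rev, mul_inv_cancel_left]
  rw [h1, conjq φ hφ, mul_assoc, mul_inv_cancel, mul_one]

/-- The mod-`m` quotient character. -/
noncomputable def chi (m : ℕ) : G →* Multiplicative (ZMod m) :=
  (AddMonoidHom.toMultiplicative (Int.castAddHom (ZMod m))).comp (pi φ hφ)

lemma chi_apply (m : ℕ) (g : G) :
    chi φ hφ m g = Multiplicative.ofAdd ((Multiplicative.toAdd (pi φ hφ g) : ℤ) : ZMod m) := rfl

lemma chi_rel (m : ℕ) (g x : G) (hx : x ∈ (chi φ hφ m).ker) (j : ℤ) :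
    (m : ℤ) ∣ j * Multiplicative.toAdd (pi φ hφ g)
      - Multiplicative.toAdd (pi φ hφ (g ^ j * x)) := by
  have hx1 : chi φ hφ m x = 1 := hx
  have h0 : chi φ hφ m (g ^ j * x) = (chi φ hφ m g) ^ j := by
    rw [map_mul, map_zpow, hx1, mul_one]
  have h2 := congrArg Multiplicative.toAdd h0
  simp only [chi_apply, toAdd_ofAdd, toAdd_zpow, zsmul_eq_mul] at h2
  rw [show ((j : ZMod m) * ((Multiplicative.toAdd (pi φ hφ g) : ℤ) : ZMod m))
      = ((j * Multiplicative.toAdd (pi φ hφ g) : ℤ) : ZMod m) by push_cast; ring] at h2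
  exact (ZMod.intCast_eq_intCast_iff_dvd_sub _ _ _).mp h2

end Stmt6Aux

/-- If for all `g₁, g₂ ∈ A` with `g₂ ∉ ⟨g₁⟩` there is a finite-index
normal subgroup `Gbar` of `G = A∗_φ` with `g₂ ∉ ⟨g₁⟩·Gbar`, then `G` is cyclic
subgroup separable. -/
theorem stmt_6 (n : ℕ) (hn : 1 ≤ n)
    (φ : FreeAb n →* FreeAb n) (hφ : Function.Injective φ)
    (hA : ∀ g₁ g₂ : FreeAb n,
      (HNNExtension.of g₂ : AscHNN φ hφ) ∉
          Subgroup.zpowers (HNNExtension.of g₁ : AscHNN φ hφ) →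
        ∃ Gbar : Subgroup (AscHNN φ hφ), Gbar.Normal ∧ Gbar.FiniteIndex ∧
          (HNNExtension.of g₂ : AscHNN φ hφ) ∉
            ((Subgroup.zpowers (HNNExtension.of g₁ : AscHNN φ hφ) : Set (AscHNN φ hφ)) *
              (Gbar : Set (AscHNN φ hφ)))) :
    ∀ g h : AscHNN φ hφ, h ∉ Subgroup.zpowers g →
      ∃ N : Subgroup (AscHNN φ hφ), N.Normal ∧ N.FiniteIndex ∧
        h ∉ ((Subgroup.zpowers g : Set (AscHNN φ hφ)) * (N : Set (AscHNN φ hφ))) := by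
  classical
  intro g h hgh
  set π := Stmt6Aux.pi φ hφ with hπ
  set a : ℤ := Multiplicative.toAdd (π g) with ha_def
  set b : ℤ := Multiplicative.toAdd (π h) with hb_def
  -- helper to decompose membership in the set product
  have mem_decomp : ∀ (N : Subgroup (AscHNN φ hφ)) , h ∈ ((Subgroup.zpowers g : Set (AscHNN φ hφ)) * (N : Set (AscHNN φ hφ))) →
      ∃ (j : ℤ) (x : (AscHNN φ hφ)), x ∈ N ∧ h = g ^ j * x := by
    intro N hmem
    rw [Set.mem_mul] at hmem
    obtain ⟨y, hy, x, hx, hyx⟩ := hmem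
    obtain ⟨j, rfl⟩ := Subgroup.mem_zpowers_iff.mp (SetLike.mem_coe.mp hy)
    exact ⟨j, x, SetLike.mem_coe.mp hx, hyx.symm⟩
  rcases eq_or_ne a 0 with ha | ha
  · rcases eq_or_ne b 0 with hb | hb
    · -- both in the kernel of π : conjugate into A and use hA
      have hg1 : π g = 1 := by
        apply Multiplicative.toAdd.injective; exact ha
      have hh1 : π h = 1 := by
        apply Multiplicative.toAdd.injective; exact hb
      obtain ⟨p₁, hp₁⟩ := Stmt6Aux.ker_conj φ hφ g hg1
      obtain ⟨p₂, hp₂⟩ := Stmt6Aux.ker_conj φ hφ h hh1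
      set k := max p₁ p₂
      obtain ⟨g₁, hg₁⟩ := hp₁ k (le_max_left _ _)
      obtain ⟨g₂, hg₂⟩ := hp₂ k (le_max_right _ _)
      set u := (HNNExtension.t : (AscHNN φ hφ)) ^ k
      have hsep : (HNNExtension.of g₂ : (AscHNN φ hφ)) ∉ Subgroup.zpowers (HNNExtension.of g₁ : (AscHNN φ hφ)) := by
        intro hmem
        obtain ⟨j, hj⟩ := Subgroup.mem_zpowers_iff.mp hmem
        rw [← hg₁, ← hg₂, conj_zpow] at hj
        apply hgh
        exact Subgroup.mem_zpowers_iff.mpr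
          ⟨j, mul_left_cancel (mul_right_cancel hj)⟩
      obtain ⟨Gbar, hN, hFI, hnot⟩ := hA g₁ g₂ hsep
      refine ⟨Gbar, hN, hFI, ?_⟩
      intro hmem
      obtain ⟨j, x, hx, rfl⟩ := mem_decomp Gbar hmem
      apply hnot
      have hx' : u * x * u⁻¹ ∈ Gbar := hN.conj_mem x hx u
      have : (HNNExtension.of g₂ : (AscHNN φ hφ)) = (HNNExtension.of g₁ : (AscHNN φ hφ)) ^ j * (u * x * u⁻¹) := by
        rw [← hg₁, ← hg₂, conj_zpow]
        group
      rw [this]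
      exact Set.mul_mem_mul (SetLike.mem_coe.mpr (Subgroup.zpow_mem _ (Subgroup.mem_zpowers _) j))
        (SetLike.mem_coe.mpr hx')
    · -- π g = 0, π h = b ≠ 0 : kill with a finite cyclic quotient
      refine ⟨(Stmt6Aux.chi φ hφ (b.natAbs + 1)).ker, MonoidHom.normal_ker _, ?_, ?_⟩
      · haveI : NeZero (b.natAbs + 1) := ⟨Nat.succ_ne_zero _⟩
        exact Subgroup.finiteIndex_ker _
      · intro hmem
        obtain ⟨j, x, hx, rfl⟩ := mem_decomp _ hmem
        have hd := Stmt6Aux.chi_rel φ hφ (b.natAbs + 1) g x hx j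
        rw [← hπ, ← ha_def, ← hb_def, ha, mul_zero, zero_sub, dvd_neg] at hd
        have hle := Int.le_of_dvd (abs_pos.mpr hb) ((dvd_abs _ _).mpr hd)
        rw [Int.abs_eq_natAbs] at hle
        omega
  · by_cases hab : a ∣ b
    · -- the crucial case: h is a power of g times a kernel element
      obtain ⟨k, hk⟩ := hab
      have hh' : π (g ^ (-k) * h) = 1 := by
        apply Multiplicative.toAdd.injective
        rw [map_mul, map_zpow]
        simp only [toAdd_mul, toAdd_zpow, zsmul_eq_mul, ← ha_def, ← hb_def, toAdd_one]
        push_cast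
        rw [hk]; ring
      have hne : g ^ (-k) * h ≠ 1 := by
        intro e
        apply hgh
        refine Subgroup.mem_zpowers_iff.mpr ⟨k, ?_⟩
        have := congrArg (fun z => g ^ k * z) e
        simpa [← mul_assoc, ← zpow_add] using this.symm
      obtain ⟨p, hp⟩ := Stmt6Aux.ker_conj φ hφ _ hh'
      obtain ⟨c, hc⟩ := hp p le_rfl
      set u := (HNNExtension.t : (AscHNN φ hφ)) ^ p
      have hcne : (HNNExtension.of c : (AscHNN φ hφ)) ≠ 1 := by
        rw [← hc]
        intro e
        apply hne
        have : u * (g ^ (-k) * h) * u⁻¹ * u = 1 * u := by rw [e]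
        simpa [mul_assoc] using this
      have hsep : (HNNExtension.of c : (AscHNN φ hφ)) ∉
          Subgroup.zpowers (HNNExtension.of (1 : FreeAb n) : (AscHNN φ hφ)) := by
        rw [map_one, Subgroup.zpowers_one_eq_bot]
        simpa using hcne
      obtain ⟨Gbar, hN, hFI, hnot⟩ := hA 1 c hsep
      haveI := hN
      haveI := hFI
      have hh'Gbar : g ^ (-k) * h ∉ Gbar := by
        intro hmem
        apply hnot
        have : (HNNExtension.of c : (AscHNN φ hφ)) ∈ Gbar := by
          rw [← hc]; exact hN.conj_mem _ hmem u
        have h1 : (1 : AscHNN φ hφ) ∈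
            ((Subgroup.zpowers (HNNExtension.of (1 : FreeAb n) : AscHNN φ hφ)) :
              Set (AscHNN φ hφ)) :=
          SetLike.mem_coe.mpr (Subgroup.one_mem _)
        simpa using Set.mul_mem_mul h1 (SetLike.mem_coe.mpr this)
      set r := Gbar.index with hr
      set m := a.natAbs * r with hm
      refine ⟨Gbar ⊓ (Stmt6Aux.chi φ hφ m).ker, inferInstance, ?_, ?_⟩
      · haveI : NeZero m := ⟨by
          have h1 : a.natAbs ≠ 0 := Int.natAbs_ne_zero.mpr ha
          have h2 : r ≠ 0 := hFI.index_ne_zero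
          positivity⟩
        haveI : (Stmt6Aux.chi φ hφ m).ker.FiniteIndex := Subgroup.finiteIndex_ker _
        infer_instance
      · intro hmem
        obtain ⟨j, x, hx, rfl⟩ := mem_decomp _ hmem
        have hxG : x ∈ Gbar := hx.1
        have hd := Stmt6Aux.chi_rel φ hφ m g x hx.2 j
        rw [← hπ, ← ha_def, ← hb_def] at hd
        have hd2 : ((a.natAbs : ℤ) * r) ∣ (j - k) * a := by
          have : (m : ℤ) = (a.natAbs : ℤ) * r := by push_cast [hm]; ring
          rw [← this]
          have : j * a - b = (j - k) * a := by rw [hk]; ring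
          rwa [this] at hd
        have hrd : (r : ℤ) ∣ j - k := by
          have hna : 0 < a.natAbs := Int.natAbs_pos.mpr ha
          have h3 : a.natAbs * r ∣ a.natAbs * (j - k).natAbs := by
            have h5 := Int.natAbs_dvd_natAbs.mpr hd2
            simpa [Int.natAbs_mul, Int.natAbs_natCast, Int.natAbs_abs, mul_comm] using h5
          exact Int.dvd_natAbs.mp (Int.natCast_dvd_natCast.mpr
            ((Nat.mul_dvd_mul_iff_left hna).mp h3))
        obtain ⟨s, hs⟩ := hrd
        have hpow : g ^ (j - k) ∈ Gbar := by
          rw [hs, zpow_mul, zpow_natCast]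
          exact Subgroup.zpow_mem _ (Gbar.pow_index_mem g) s
        apply hh'Gbar
        have : g ^ (-k) * (g ^ j * x) = g ^ (j - k) * x := by
          rw [← mul_assoc, ← zpow_add]
          congr 1
          ring_nf
        rw [this]
        exact Subgroup.mul_mem _ hpow hxG
    · -- a ∤ b : kill with the mod |a| quotient
      refine ⟨(Stmt6Aux.chi φ hφ a.natAbs).ker, MonoidHom.normal_ker _, ?_, ?_⟩
      · haveI : NeZero a.natAbs := ⟨Int.natAbs_ne_zero.mpr ha⟩
        exact Subgroup.finiteIndex_ker _
      · intro hmem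
        obtain ⟨j, x, hx, rfl⟩ := mem_decomp _ hmem
        have hd := Stmt6Aux.chi_rel φ hφ a.natAbs g x hx j
        rw [← hπ, ← ha_def, ← hb_def] at hd
        have hd' : a ∣ j * a - b := (Int.natAbs_dvd).mp hd
        exact hab (by
          have : b = j * a - (j * a - b) := by ring
          rw [this]
          exact dvd_sub (dvd_mul_left a j) hd')
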